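/- Let lambda > 0, N >= 1, and define F_N(z_1,...,z_N) = z_1 + sum_{k=2}^{N+1} (z_k - z_{k-1}) / (1 + z_1 + ... + z_{k-1}) subject to 1 <= z_1 <= ... <= z_N <= z_{N+1} = e^{lambda}, with z_0 = 1. Then the minimum of F_{N+1} over (N+1)-tuples is strictly smaller than the minimum of F_N over N-tuples; i.e., adding an extra relay strictly decreases the optimal net attenuation. -/

import Mathlib

/-- The set of values of the net-attenuation objective
`F_N(z) = z₁ + ∑_{k=2}^{N+1} (z_k - z_{k-1})/(z₀ + z₁ + ⋯ + z_{k-1})`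
over feasible tuples `1 = z₀ ≤ z₁ ≤ ⋯ ≤ z_N ≤ z_{N+1} = e^λ`. -/
def attenuationValues (N : ℕ) (lam : ℝ) : Set ℝ :=
  {v | ∃ z : ℕ → ℝ, z 0 = 1 ∧ z (N + 1) = Real.exp lam ∧
    (∀ k ≤ N, z k ≤ z (k + 1)) ∧
    v = z 1 + ∑ k ∈ Finset.Icc 2 (N + 1),
      (z k - z (k - 1)) / ∑ l ∈ Finset.range k, z l}

private lemma mono_of_step {z : ℕ → ℝ} {M : ℕ} (hz : ∀ k ≤ M, z k ≤ z (k + 1)) :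
    ∀ i j, i ≤ j → j ≤ M + 1 → z i ≤ z j := by
  intro i j hij hjM
  induction j with
  | zero => interval_cases i; rfl
  | succ n ih =>
    rcases Nat.eq_or_lt_of_le hij with h | h
    · exact le_of_eq (by rw [h])
    · exact le_trans (ih (Nat.lt_succ_iff.mp h) (by omega)) (hz n (by omega))

private lemma obj_rw (M : ℕ) (z : ℕ → ℝ) (hz0 : z 0 = 1) :
    z 1 + ∑ k ∈ Finset.Icc 2 (M + 1), (z k - z (k - 1)) / ∑ l ∈ Finset.range k, z l
      = 1 + ∑ k ∈ Finset.Icc 1 (M + 1), (z k - z (k - 1)) / ∑ l ∈ Finset.range k, z l := by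
  have h : Finset.Icc 1 (M + 1) = insert 1 (Finset.Icc 2 (M + 1)) := by
    ext x; simp only [Finset.mem_Icc, Finset.mem_insert]; omega
  rw [h, Finset.sum_insert (by simp)]
  simp only [Finset.sum_range_one, hz0]
  ring

private lemma atten_nonempty (M : ℕ) (lam : ℝ) (h : (1:ℝ) ≤ Real.exp lam) :
    (attenuationValues M lam).Nonempty := by
  refine ⟨_, fun k => if k = 0 then 1 else Real.exp lam, by simp, by simp, ?_, rfl⟩
  intro k hk
  by_cases h0 : k = 0 <;> simp [h0, h]

private lemma atten_bddBelow (M : ℕ) (lam : ℝ) : BddBelow (attenuationValues M lam) := by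
  refine ⟨0, fun v hv => ?_⟩
  obtain ⟨z, hz0, hzE, hzm, rfl⟩ := hv
  have hmono := mono_of_step hzm
  have h1 : ∀ l ≤ M + 1, (1:ℝ) ≤ z l := fun l hl => hz0 ▸ hmono 0 l (Nat.zero_le _) hl
  have hsum : (0:ℝ) ≤ ∑ k ∈ Finset.Icc 2 (M + 1),
      (z k - z (k - 1)) / ∑ l ∈ Finset.range k, z l := by
    apply Finset.sum_nonneg
    intro k hk
    rw [Finset.mem_Icc] at hk
    apply div_nonneg
    · have := hmono (k - 1) k (by omega) (by omega); linarith
    · apply Finset.sum_nonneg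
      intro l hl
      rw [Finset.mem_range] at hl
      have := h1 l (by omega); linarith
  have := h1 1 (by omega)
  linarith

private lemma step_lemma (N : ℕ) (lam : ℝ) (hlam : 0 < lam) :
    ∃ ε > 0, ∀ v ∈ attenuationValues N lam,
      ∃ v' ∈ attenuationValues (N + 1) lam, v' + ε ≤ v := by
  set E := Real.exp lam with hEdef
  have hE1 : 1 < E := by
    rw [hEdef, show (1:ℝ) = Real.exp 0 by simp]
    exact Real.exp_lt_exp.mpr hlam
  have hE0 : 0 < E := by linarith
  set δ : ℝ := (E - 1) / (N + 1) with hδdef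
  have hNpos : (0:ℝ) < (N:ℝ) + 1 := by positivity
  have hδ0 : 0 < δ := div_pos (by linarith) hNpos
  refine ⟨δ / (2 * ((N:ℝ) + 1) * ((N:ℝ) + 2) * E ^ 2), by positivity, ?_⟩
  intro v hv
  obtain ⟨z, hz0, hzE, hzm, hveq⟩ := hv
  have hmono := mono_of_step hzm
  have h1 : ∀ l ≤ N + 1, (1:ℝ) ≤ z l := fun l hl => hz0 ▸ hmono 0 l (Nat.zero_le _) hl
  have hle : ∀ l ≤ N + 1, z l ≤ E := fun l hl => by
    rw [hEdef, ← hzE]; exact hmono l (N + 1) hl le_rfl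
  -- telescoping sum of gaps
  have hIcc : Finset.Icc 1 (N + 1) = Finset.map (addRightEmbedding 1) (Finset.range (N + 1)) := by
    have hr : Finset.range (N + 1) = Finset.Icc 0 N := by
      ext x; simp only [Finset.mem_range, Finset.mem_Icc]; omega
    rw [hr, Finset.map_add_right_Icc]
  have htel : ∑ k ∈ Finset.Icc 1 (N + 1), (z k - z (k - 1)) = E - 1 := by
    rw [hIcc, Finset.sum_map]
    simp only [addRightEmbedding_apply, Nat.add_sub_cancel]
    rw [Finset.sum_range_sub z (N + 1), hz0, hzE]
  -- pigeonhole: find a big gap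
  have hpig : ∃ k ∈ Finset.Icc 1 (N + 1), δ ≤ z k - z (k - 1) := by
    by_contra hcon
    push_neg at hcon
    have hlt : ∑ k ∈ Finset.Icc 1 (N + 1), (z k - z (k - 1)) <
        ∑ _k ∈ Finset.Icc 1 (N + 1), δ :=
      Finset.sum_lt_sum_of_nonempty ⟨1, by simp⟩ hcon
    rw [htel, Finset.sum_const, Nat.card_Icc] at hlt
    simp only [Nat.add_sub_cancel, nsmul_eq_mul] at hlt
    rw [hδdef] at hlt
    have : ((N:ℝ) + 1) * ((E - 1) / ((N:ℝ) + 1)) = E - 1 := by field_simp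
    push_cast at hlt
    rw [this] at hlt
    linarith
  obtain ⟨k₀, hk₀mem, hgap⟩ := hpig
  rw [Finset.mem_Icc] at hk₀mem
  obtain ⟨hk₀1, hk₀N⟩ := hk₀mem
  set w : ℝ := (z (k₀ - 1) + z k₀) / 2 with hwdef
  set d : ℝ := z k₀ - z (k₀ - 1) with hddef
  have hzstep : z (k₀ - 1) ≤ z k₀ := hmono (k₀ - 1) k₀ (by omega) (by omega)
  have hw1 : 1 ≤ w := by
    have := h1 (k₀ - 1) (by omega); have := h1 k₀ (by omega)
    rw [hwdef]; linarith
  have hwE : w ≤ E := by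
    have := hle (k₀ - 1) (by omega); have := hle k₀ (by omega)
    rw [hwdef]; linarith
  set z' : ℕ → ℝ := fun j => if j < k₀ then z j else if j = k₀ then w else z (j - 1)
    with hz'def
  have hz'lt : ∀ j, j < k₀ → z' j = z j := by intro j hj; simp [hz'def, hj]
  have hz'k : z' k₀ = w := by simp [hz'def]
  have hz'gt : ∀ j, k₀ < j → z' j = z (j - 1) := by
    intro j hj
    simp [hz'def, Nat.lt_asymm hj, Nat.ne_of_gt hj]
  -- partial sums
  have hS'eq : ∀ j, j ≤ k₀ →
      (∑ l ∈ Finset.range j, z' l) = ∑ l ∈ Finset.range j, z l := by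
    intro j hj
    apply Finset.sum_congr rfl
    intro l hl
    rw [Finset.mem_range] at hl
    exact hz'lt l (by omega)
  have hS'gt : ∀ m, (∑ l ∈ Finset.range (k₀ + 1 + m), z' l)
      = (∑ l ∈ Finset.range (k₀ + m), z l) + w := by
    intro m
    induction m with
    | zero =>
      simp only [Nat.add_zero]
      rw [Finset.sum_range_succ, hS'eq k₀ le_rfl, hz'k]
    | succ n ih =>
      rw [show k₀ + 1 + (n + 1) = (k₀ + 1 + n) + 1 by ring, Finset.sum_range_succ, ih,
        hz'gt _ (by omega), show k₀ + 1 + n - 1 = k₀ + n by omega,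
        show k₀ + (n + 1) = (k₀ + n) + 1 by ring, Finset.sum_range_succ]
      ring
  have hSlb : ∀ k, 1 ≤ k → k ≤ N + 1 → (1:ℝ) ≤ ∑ l ∈ Finset.range k, z l := by
    intro k hk1 hkN
    have := Finset.card_nsmul_le_sum (Finset.range k) z 1 (by
      intro l hl; rw [Finset.mem_range] at hl; exact h1 l (by omega))
    rw [Finset.card_range, nsmul_eq_mul] at this
    calc (1:ℝ) ≤ (k:ℝ) * 1 := by
          rw [mul_one]; exact_mod_cast hk1
      _ ≤ _ := this
  have hSub : ∀ k, k ≤ N + 1 → (∑ l ∈ Finset.range k, z l) ≤ (N + 1 : ℝ) * E := by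
    intro k hkN
    have := Finset.sum_le_card_nsmul (Finset.range k) z E (by
      intro l hl; rw [Finset.mem_range] at hl; exact hle l (by omega))
    rw [Finset.card_range, nsmul_eq_mul] at this
    calc (∑ l ∈ Finset.range k, z l) ≤ (k:ℝ) * E := this
      _ ≤ (N + 1 : ℝ) * E := by
          apply mul_le_mul_of_nonneg_right _ hE0.le
          exact_mod_cast hkN
  set S : ℝ := ∑ l ∈ Finset.range k₀, z l with hSdef
  have hS1 : (1:ℝ) ≤ S := hSlb k₀ hk₀1 (by omega)
  have hSle : S ≤ (N + 1 : ℝ) * E := hSub k₀ (by omega)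
  -- the new tuple is feasible
  refine ⟨_, ⟨z', ?_, ?_, ?_, rfl⟩, ?_⟩
  · rw [hz'lt 0 (by omega), hz0]
  · rw [hz'gt (N + 1 + 1) (by omega)]; exact hzE
  · intro j hj
    rcases Nat.lt_trichotomy (j + 1) k₀ with h | h | h
    · rw [hz'lt j (by omega), hz'lt (j + 1) h]
      exact hzm j (by omega)
    · rw [hz'lt j (by omega), h, hz'k, show j = k₀ - 1 by omega, hwdef]
      linarith
    · rcases Nat.lt_trichotomy j k₀ with h2 | h2 | h2
      · omega
      · rw [h2, hz'k, hz'gt (k₀ + 1) (by omega), show k₀ + 1 - 1 = k₀ from rfl, hwdef]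
        linarith
      · rw [hz'gt j h2, hz'gt (j + 1) (by omega), show j + 1 - 1 = j by omega]
        have := hzm (j - 1) (by omega)
        rwa [show j - 1 + 1 = j by omega] at this
  -- the value inequality
  · rw [hveq, obj_rw N z hz0, obj_rw (N + 1) z' (by rw [hz'lt 0 (by omega), hz0])]
    have hIoc : ∀ n : ℕ, Finset.Icc 1 n = Finset.Ioc 0 n := by
      intro n; ext x; simp only [Finset.mem_Icc, Finset.mem_Ioc]; omega
    rw [hIoc, hIoc]
    set t : ℕ → ℝ := fun k => (z k - z (k - 1)) / ∑ l ∈ Finset.range k, z l with htdef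
    set t' : ℕ → ℝ := fun k => (z' k - z' (k - 1)) / ∑ l ∈ Finset.range k, z' l with ht'def
    have split' : ∑ j ∈ Finset.Ioc 0 (N + 1 + 1), t' j
        = (∑ j ∈ Finset.Ioc 0 (k₀ - 1), t' j) + (t' k₀ + t' (k₀ + 1))
          + ∑ j ∈ Finset.Ioc (k₀ + 1) (N + 2), t' j := by
      rw [← Finset.sum_Ioc_consecutive t' (show 0 ≤ k₀ + 1 by omega)
            (show k₀ + 1 ≤ N + 2 by omega),
          ← Finset.sum_Ioc_consecutive t' (show 0 ≤ k₀ - 1 by omega)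
            (show k₀ - 1 ≤ k₀ + 1 by omega)]
      have hpair : Finset.Ioc (k₀ - 1) (k₀ + 1) = {k₀, k₀ + 1} := by
        ext x; simp only [Finset.mem_Ioc, Finset.mem_insert, Finset.mem_singleton]; omega
      rw [hpair, Finset.sum_pair (by omega)]
    have split : ∑ j ∈ Finset.Ioc 0 (N + 1), t j
        = (∑ j ∈ Finset.Ioc 0 (k₀ - 1), t j) + t k₀
          + ∑ j ∈ Finset.Ioc k₀ (N + 1), t j := by
      rw [← Finset.sum_Ioc_consecutive t (show 0 ≤ k₀ by omega)
            (show k₀ ≤ N + 1 by omega),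
          ← Finset.sum_Ioc_consecutive t (show 0 ≤ k₀ - 1 by omega)
            (show k₀ - 1 ≤ k₀ by omega)]
      have hsing : Finset.Ioc (k₀ - 1) k₀ = {k₀} := by
        ext x; simp only [Finset.mem_Ioc, Finset.mem_singleton]; omega
      rw [hsing, Finset.sum_singleton]
    have heq1 : (∑ j ∈ Finset.Ioc 0 (k₀ - 1), t' j) = ∑ j ∈ Finset.Ioc 0 (k₀ - 1), t j := by
      apply Finset.sum_congr rfl
      intro j hj
      rw [Finset.mem_Ioc] at hj
      rw [ht'def, htdef]
      simp only
      rw [hz'lt j (by omega), hz'lt (j - 1) (by omega), hS'eq j (by omega)]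
    have hkey3 : (∑ j ∈ Finset.Ioc (k₀ + 1) (N + 2), t' j)
        ≤ ∑ j ∈ Finset.Ioc k₀ (N + 1), t j := by
      have hmap : Finset.Ioc (k₀ + 1) (N + 2)
          = Finset.map (addRightEmbedding 1) (Finset.Ioc k₀ (N + 1)) := by
        rw [Finset.map_add_right_Ioc]
      rw [hmap, Finset.sum_map]
      apply Finset.sum_le_sum
      intro k hk
      rw [Finset.mem_Ioc] at hk
      simp only [addRightEmbedding_apply, ht'def, htdef]
      rw [hz'gt (k + 1) (by omega), show k + 1 - 1 = k from rfl, hz'gt k (by omega)]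
      have hden : (∑ l ∈ Finset.range (k + 1), z' l) = (∑ l ∈ Finset.range k, z l) + w := by
        have := hS'gt (k - k₀)
        rwa [show k₀ + 1 + (k - k₀) = k + 1 by omega, show k₀ + (k - k₀) = k by omega] at this
      rw [hden]
      have hnum : 0 ≤ z k - z (k - 1) := by
        have := hmono (k - 1) k (by omega) (by omega); linarith
      have hS : (1:ℝ) ≤ ∑ l ∈ Finset.range k, z l := hSlb k (by omega) (by omega)
      gcongr <;> linarith
    have hkey2 : t' k₀ + t' (k₀ + 1)
        + δ / (2 * ((N:ℝ) + 1) * ((N:ℝ) + 2) * E ^ 2) ≤ t k₀ := by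
      have ht'k : t' k₀ = (d / 2) / S := by
        rw [ht'def]; simp only
        rw [hz'k, hz'lt (k₀ - 1) (by omega), hS'eq k₀ le_rfl, hwdef, hddef]
        ring
      have ht'k1 : t' (k₀ + 1) = (d / 2) / (S + w) := by
        rw [ht'def]; simp only
        rw [hz'gt (k₀ + 1) (by omega), show k₀ + 1 - 1 = k₀ from rfl, hz'k]
        have h0 := hS'gt 0
        rw [Nat.add_zero] at h0
        change _ = S + w at h0
        rw [h0, hwdef, hddef]
        ring
      have htk : t k₀ = d / S := by rw [htdef]
      rw [ht'k, ht'k1, htk]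
      clear_value t' t z' S d w δ E
      have hd : δ ≤ d := hgap
      have hSpos : (0:ℝ) < S := by linarith
      have hSwpos : (0:ℝ) < S + w := by linarith
      have hεle : δ / (2 * ((N:ℝ) + 1) * ((N:ℝ) + 2) * E ^ 2)
          ≤ d * w / (2 * S * (S + w)) := by
        have hd0 : (0:ℝ) ≤ d := by linarith
        have hdw : δ ≤ d * w := by
          have h2 := mul_le_mul_of_nonneg_left hw1 hd0
          rw [mul_one] at h2
          linarith
        have hSw : S + w ≤ ((N:ℝ) + 2) * E := by
          have hNE : ((N:ℝ) + 2) * E = ((N:ℝ) + 1) * E + E := by ring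
          linarith [hSle, hwE]
        have hprod : 2 * S * (S + w) ≤ 2 * (((N:ℝ) + 1) * E) * (((N:ℝ) + 2) * E) := by
          have h3 := mul_le_mul hSle hSw (by linarith) (mul_nonneg (by positivity) hE0.le)
          linarith
        have hrr : 2 * (((N:ℝ) + 1) * E) * (((N:ℝ) + 2) * E)
            = 2 * ((N:ℝ) + 1) * ((N:ℝ) + 2) * E ^ 2 := by ring
        apply div_le_div₀ (mul_nonneg hd0 (by linarith)) hdw (by positivity)
        linarith
      have heqd : d / S - (d / 2) / S - (d / 2) / (S + w) = d * w / (2 * S * (S + w)) := by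
        field_simp
        ring
      linarith
    rw [split', split, heq1]
    linarith

theorem stmt_8 (N : ℕ) (hN : 1 ≤ N) (lam : ℝ) (hlam : 0 < lam) :
    sInf (attenuationValues (N + 1) lam) < sInf (attenuationValues N lam) := by
  have hE : (1:ℝ) ≤ Real.exp lam := Real.one_le_exp hlam.le
  obtain ⟨ε, hε, hstep⟩ := step_lemma N lam hlam
  have h1 := atten_nonempty N lam hE
  have hb := atten_bddBelow (N + 1) lam
  have key : sInf (attenuationValues (N + 1) lam) + ε ≤ sInf (attenuationValues N lam) := by
    apply le_csInf h1
    intro v hv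
    obtain ⟨v', hv', hle⟩ := hstep v hv
    have := csInf_le hb hv'
    linarith
  linarith
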